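/- arXiv:2212.03706 — 3 statements merged into one kernel-verified Lean document; each statement's English description precedes it below -/
import Mathlib

section
/- Let T : ℝ² → ℝ² be the linear map T(x, t) = (γ(x − vt), a·t + b·x) with γ > 0, and suppose its inverse has the form T⁻¹(x', t') = (γ(x' + v·t'), a'·t' + b'·x') for some constants a', b'. Then a = γ, b = γ·(1/γ² − 1)/v, provided v ≠ 0. -/
theorem stmt_8 (γ v a b a' b' : ℝ) (hγ : 0 < γ) (hv : v ≠ 0)
    (T : ℝ × ℝ → ℝ × ℝ) (Tinv : ℝ × ℝ → ℝ × ℝ)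
    (hT : ∀ p : ℝ × ℝ, T p = (γ * (p.1 - v * p.2), a * p.2 + b * p.1))
    (hTinv : ∀ p : ℝ × ℝ, Tinv p = (γ * (p.1 + v * p.2), a' * p.2 + b' * p.1))
    (hleft : ∀ p, Tinv (T p) = p) (hright : ∀ p, T (Tinv p) = p) :
    a = γ ∧ b = γ * (1 / γ ^ 2 - 1) / v := by
  have h1 := hleft (1, 0)
  have h2 := hleft (0, 1)
  rw [hT, hTinv] at h1 h2
  simp only [Prod.mk.injEq] at h1 h2
  obtain ⟨h1a, h1b⟩ := h1
  obtain ⟨h2a, h2b⟩ := h2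
  have hγ' : γ ≠ 0 := ne_of_gt hγ
  constructor
  · have : v * (a - γ) = 0 := by
      apply mul_left_cancel₀ hγ'
      ring_nf
      ring_nf at h2a
      linarith
    rcases mul_eq_zero.mp this with h | h
    · exact absurd h hv
    · linarith
  · field_simp at h1a ⊢
    nlinarith [h1a]
end

section
/- Suppose γ : ℝ → ℝ is even, positive, with γ(0) = 1, and for all v, v' ∈ ℝ in its domain the composition of the boosts B_v(x,t) = (γ(v)(x−vt), γ(v)(t + (x/v)(1/γ(v)²−1))) (with the t-formula interpreted as t'=γ(v)t when v=0) is again a boost of the same form with some velocity v''. Then the function h(v) = (1/γ(v)² − 1)/v² is constant on the set of nonzero v. -/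
noncomputable def genBoost (γ : ℝ → ℝ) (v : ℝ) : ℝ × ℝ → ℝ × ℝ := fun p =>
  (γ v * (p.1 - v * p.2),
   if v = 0 then γ v * p.2
   else γ v * (p.2 + (p.1 / v) * (1 / (γ v) ^ 2 - 1)))

theorem stmt_12 (γ : ℝ → ℝ) (heven : ∀ v, γ (-v) = γ v) (hpos : ∀ v, 0 < γ v)
    (h0 : γ 0 = 1)
    (hclos : ∀ v v' : ℝ, ∃ v'' : ℝ,
      genBoost γ v' ∘ genBoost γ v = genBoost γ v'') :
    ∀ v v' : ℝ, v ≠ 0 → v' ≠ 0 →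
      (1 / (γ v) ^ 2 - 1) / v ^ 2 = (1 / (γ v') ^ 2 - 1) / v' ^ 2 := by
  intro v v' hv hv'
  obtain ⟨v'', hc⟩ := hclos v v'
  have h1 := congrArg Prod.fst (congrFun hc (1, 0))
  have h2 := congrArg Prod.snd (congrFun hc (0, 1))
  simp only [genBoost, Function.comp_apply, if_neg hv, if_neg hv'] at h1 h2
  have h2' : γ v' * (γ v * (1 + 0 / v * (1 / γ v ^ 2 - 1)) +
      γ v * (0 - v * 1) / v' * (1 / γ v' ^ 2 - 1)) = γ v'' := by
    rw [h2]
    split_ifs with h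
    · simp
    · simp
  have h1' : γ v' * (γ v * (1 - v * 0) -
      v' * (γ v * (0 + 1 / v * (1 / γ v ^ 2 - 1)))) = γ v'' := by
    rw [h1]; ring
  have key1 := mul_left_cancel₀ (hpos v').ne' (h1'.trans h2'.symm)
  have key2 : γ v * (1 - v' * (1 / v) * (1 / γ v ^ 2 - 1)) =
      γ v * (1 + 0 / v * (1 / γ v ^ 2 - 1) - v * (1 / v') * (1 / γ v' ^ 2 - 1)) := by
    linear_combination key1
  have key3 := mul_left_cancel₀ (hpos v).ne' key2
  have hγv := (hpos v).ne'
  have hγv' := (hpos v').ne'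
  field_simp at key3 ⊢
  linear_combination -key3
end

section
/- Any continuous even function γ : ℝ → ℝ with γ(0) = 1 satisfying the closure identity γ(v)·γ(v')·(1 − k·v·v') = γ((v+v')/(1 − k·v·v')) for all v, v' with 1 − k·v·v' > 0 (and 1 + k·v², 1 + k·v'² > 0), where k ∈ ℝ is fixed, must equal γ(v) = 1/√(1 + k·v²) on its domain, provided γ > 0. -/
theorem stmt_19 (k : ℝ) (γ : ℝ → ℝ) (hcont : Continuous γ)
    (heven : ∀ v, γ (-v) = γ v) (h0 : γ 0 = 1) (hpos : ∀ v, 0 < γ v)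
    (hclos : ∀ v v' : ℝ, 1 + k * v ^ 2 > 0 → 1 + k * v' ^ 2 > 0 →
      1 - k * v * v' > 0 →
      γ v * γ v' * (1 - k * v * v') = γ ((v + v') / (1 - k * v * v'))) :
    ∀ v : ℝ, 1 + k * v ^ 2 > 0 → γ v = 1 / Real.sqrt (1 + k * v ^ 2) := by
  intro v hv
  have h1 : 1 + k * (-v) ^ 2 > 0 := by simpa using hv
  have h2 : 1 - k * v * (-v) > 0 := by nlinarith
  have hc := hclos v (-v) hv h1 h2
  rw [heven] at hc
  have key : γ v * γ v * (1 + k * v ^ 2) = 1 := by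
    have : (v + -v) / (1 - k * v * (-v)) = 0 := by simp
    rw [this, h0] at hc
    nlinarith [hc]
  set s := Real.sqrt (1 + k * v ^ 2) with hs
  have hs2 : s ^ 2 = 1 + k * v ^ 2 := Real.sq_sqrt hv.le
  have hs0 : 0 < s := Real.sqrt_pos.mpr hv
  have hg := hpos v
  have : (γ v * s) ^ 2 = 1 := by nlinarith
  have hgs : γ v * s = 1 := by nlinarith [mul_pos hg hs0]
  field_simp at hgs ⊢
  linarith
end
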